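/- Let Λ be a column-stochastic n×n matrix with zero diagonal and let q ∈ ℝ^n with q_v > 0 for all v. If the index set contains at least one isolated irreducible subset (equivalently, Λx = x has a nonzero nonnegative solution), then the maximum solution x* to Λx = x subject to x ≤ q is nonzero and satisfies x*_v = q_v for at least one index v (some constraint binds). -/

import Mathlib

/-- If the index set contains an isolated irreducible subset and q is
strictly positive, then the maximum solution of Λx = x subject to
x ≤ q is nonzero and some constraint binds. -/
theorem stmt19 (n : ℕ) (Λ : Matrix (Fin n) (Fin n) ℝ)
    (hent : ∀ i j, Λ i j ∈ Set.Icc (0:ℝ) 1)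
    (hdiag : ∀ i, Λ i i = 0)
    (hcol : ∀ j, ∑ i, Λ i j = 1)
    (q : Fin n → ℝ) (hq : ∀ v, 0 < q v)
    (hexists : ∃ V : Finset (Fin n), V.Nonempty ∧
      (∀ v ∉ V, ∀ u ∈ V, Λ v u = 0) ∧
      (∀ W ⊆ V, W.Nonempty → W ≠ V →
        ¬(∀ v ∈ V \ W, ∀ u ∈ W, Λ v u = 0)))
    (xs : Fin n → ℝ)
    (hmax : Λ.mulVec xs = xs ∧ 0 ≤ xs ∧ xs ≤ q ∧
      ∀ x : Fin n → ℝ, Λ.mulVec x = x → x ≤ q → x ≤ xs) :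
    xs ≠ 0 ∧ ∃ v, xs v = q v := by
  classical
  obtain ⟨heig, hnn, hle, hbest⟩ := hmax
  obtain ⟨V, hVne, hiso, _hirr⟩ := hexists
  obtain ⟨v0, hv0⟩ := hVne
  have hn : Nonempty (Fin n) := ⟨v0⟩
  have huniv : (Finset.univ : Finset (Fin n)).Nonempty := Finset.univ_nonempty
  -- Scaling lemma: any fixed point can be scaled (by a positive factor) below q,
  -- hence below xs.
  have scale : ∀ y : Fin n → ℝ, Λ.mulVec y = y →
      ∃ t : ℝ, 0 < t ∧ (fun v => t * y v) ≤ xs := by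
    intro y hy
    set t := Finset.univ.inf' huniv (fun v => if y v ≤ 0 then 1 else q v / y v) with ht
    have htpos : 0 < t := by
      rw [ht, Finset.lt_inf'_iff]
      intro v _
      by_cases h : y v ≤ 0
      · simp [h]
      · simp only [h, if_false]
        exact div_pos (hq v) (lt_of_not_ge h)
    refine ⟨t, htpos, ?_⟩
    have hfix : Λ.mulVec (fun v => t * y v) = fun v => t * y v := by
      have h1 : (fun v => t * y v) = t • y := by funext v; simp
      rw [h1, Matrix.mulVec_smul, hy]
    apply hbest _ hfix
    intro v
    by_cases h : y v ≤ 0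
    · have h2 : t * y v ≤ 0 := mul_nonpos_of_nonneg_of_nonpos htpos.le h
      exact h2.trans (hq v).le
    · have hyv : 0 < y v := lt_of_not_ge h
      have hmem : t ≤ q v / y v := by
        have h3 := Finset.inf'_le (fun v => if y v ≤ 0 then 1 else q v / y v)
          (Finset.mem_univ v)
        exact h3.trans_eq (if_neg h)
      calc t * y v ≤ (q v / y v) * y v := by nlinarith
        _ = q v := div_mul_cancel₀ _ hyv.ne'
  -- Build a nonzero fixed point supported on V.
  set A : Matrix V V ℝ := fun i j => Λ i j with hA
  have hNV : Nonempty {x // x ∈ V} := ⟨⟨v0, hv0⟩⟩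
  have hcolV : ∀ u : V, ∑ i : V, A i u = 1 := by
    intro u
    have h2 : ∑ i ∈ V, Λ i (u : Fin n) = ∑ i : Fin n, Λ i u := by
      apply Finset.sum_subset (Finset.subset_univ V)
      intro i _ hi
      exact hiso i hi u u.2
    have h3 : ∑ i : V, A i u = ∑ i ∈ V, Λ i (u : Fin n) := by
      simp only [hA]
      exact Finset.sum_coe_sort V (fun i => Λ i (u : Fin n))
    rw [h3, h2, hcol]
  have hker : ((A - 1).transpose).mulVec (fun _ => (1:ℝ)) = 0 := by
    funext u
    simp only [Matrix.mulVec, dotProduct, Matrix.transpose_apply, Matrix.sub_apply,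
      mul_one]
    rw [Finset.sum_sub_distrib]
    have h1 : ∑ i : V, (1 : Matrix V V ℝ) i u = 1 := by
      simp [Matrix.one_apply]
    rw [hcolV u, h1]
    simp
  have hdet : (A - 1).det = 0 := by
    have h1 : ((A - 1).transpose).det = 0 := by
      rw [← Matrix.exists_mulVec_eq_zero_iff]
      refine ⟨fun _ => (1:ℝ), ?_, hker⟩
      intro h
      have h2 := congrFun h (Classical.arbitrary _)
      norm_num at h2
    rwa [Matrix.det_transpose] at h1
  obtain ⟨w, hw0, hww⟩ := (Matrix.exists_mulVec_eq_zero_iff).mpr hdet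
  have hfixw : A.mulVec w = w := by
    have h : A.mulVec w - w = 0 := by
      rwa [Matrix.sub_mulVec, Matrix.one_mulVec] at hww
    exact sub_eq_zero.mp h
  set x : Fin n → ℝ := fun v => if h : v ∈ V then w ⟨v, h⟩ else 0 with hxdef
  have hxfix : Λ.mulVec x = x := by
    funext i
    have hsum : (Λ.mulVec x) i = ∑ u : V, Λ i (u : Fin n) * w u := by
      have h1 : (Λ.mulVec x) i = ∑ u ∈ V, Λ i u * x u := by
        show ∑ u : Fin n, Λ i u * x u = ∑ u ∈ V, Λ i u * x u
        symm
        apply Finset.sum_subset (Finset.subset_univ V)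
        intro u _ hu
        simp [hxdef, hu]
      rw [h1, ← Finset.sum_coe_sort V (fun u => Λ i u * x u)]
      apply Finset.sum_congr rfl
      intro u _
      simp [hxdef, u.2]
    by_cases hi : i ∈ V
    · have hApp : (A.mulVec w) ⟨i, hi⟩ = ∑ u : V, Λ i (u : Fin n) * w u := by
        simp [Matrix.mulVec, dotProduct, hA]
      rw [hsum, ← hApp, hfixw]
      simp [hxdef, hi]
    · have hz : ∀ u : V, Λ i (u : Fin n) * w u = 0 := fun u => by
        rw [hiso i hi u u.2, zero_mul]
      rw [hsum, Finset.sum_congr rfl (fun u _ => hz u), Finset.sum_const_zero]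
      simp [hxdef, hi]
  obtain ⟨u1, hu1⟩ := Function.ne_iff.mp hw0
  have hxu1 : x (u1 : Fin n) = w u1 := by simp [hxdef, u1.2]
  have hxu1ne : x (u1 : Fin n) ≠ 0 := by rw [hxu1]; exact hu1
  have hxneg : Λ.mulVec (-x) = -x := by rw [Matrix.mulVec_neg, hxfix]
  obtain ⟨t, htpos, htle⟩ := scale x hxfix
  obtain ⟨s, hspos, hsle⟩ := scale (-x) hxneg
  have hxs1 : 0 < xs (u1 : Fin n) := by
    rcases lt_or_gt_of_ne hxu1ne with h | h
    · have h1 : s * (-x) (u1 : Fin n) ≤ xs (u1 : Fin n) := hsle (u1 : Fin n)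
      simp only [Pi.neg_apply] at h1
      nlinarith
    · have h1 : t * x (u1 : Fin n) ≤ xs (u1 : Fin n) := htle (u1 : Fin n)
      nlinarith
  constructor
  · intro h
    rw [h] at hxs1
    simp at hxs1
  · by_contra hc
    push_neg at hc
    have hlt : ∀ v, xs v < q v := fun v => lt_of_le_of_ne (hle v) (hc v)
    set t' := Finset.univ.inf' huniv (fun v => if xs v = 0 then 2 else q v / xs v) with ht'
    have ht'1 : 1 < t' := by
      rw [ht', Finset.lt_inf'_iff]
      intro v _
      by_cases h : xs v = 0
      · simp [h]
      · have hpos : 0 < xs v := lt_of_le_of_ne (hnn v) (Ne.symm h)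
        simp only [h, if_false]
        exact (one_lt_div hpos).mpr (hlt v)
    have hfix' : Λ.mulVec (fun v => t' * xs v) = fun v => t' * xs v := by
      have h1 : (fun v => t' * xs v) = t' • xs := by funext v; simp
      rw [h1, Matrix.mulVec_smul, heig]
    have hqle : (fun v => t' * xs v) ≤ q := by
      intro v
      by_cases h : xs v = 0
      · simp [h, (hq v).le]
      · have hpos : 0 < xs v := lt_of_le_of_ne (hnn v) (Ne.symm h)
        have hmem : t' ≤ q v / xs v := by
          have h3 := Finset.inf'_le (fun v => if xs v = 0 then 2 else q v / xs v)
            (Finset.mem_univ v)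
          exact h3.trans_eq (if_neg h)
        calc t' * xs v ≤ (q v / xs v) * xs v := by nlinarith
          _ = q v := div_mul_cancel₀ _ hpos.ne'
    have hfin : t' * xs (u1 : Fin n) ≤ xs (u1 : Fin n) := hbest _ hfix' hqle (u1 : Fin n)
    nlinarith
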